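/- Let n = 2p with p > 2 prime. The only bent homogeneous monomial rotation symmetric Boolean function in n variables is f₀ = ⊕_{i=0}^{p-1} x_i x_{p+i}. -/

import Mathlib

namespace Stmt17

open scoped Fin.CommRing Fin.NatCast

def chi (a : ZMod 2) : ℤ := (-1) ^ a.val

lemma chi_add (a b : ZMod 2) : chi (a + b) = chi a * chi b := by revert a b; decide

lemma chi_zero : chi 0 = 1 := rfl
lemma chi_one : chi 1 = -1 := rfl
lemma chi_cases (a : ZMod 2) : chi a = 1 ∨ chi a = -1 := by revert a; decide
lemma chi_eq_one (a : ZMod 2) (h : chi a = 1) : a = 0 := by revert a; decide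

lemma chi_sum {ι : Type*} (s : Finset ι) (f : ι → ZMod 2) :
    chi (∑ i ∈ s, f i) = ∏ i ∈ s, chi (f i) := by
  induction s using Finset.cons_induction with
  | empty => simp [chi_zero]
  | cons a s ha ih => rw [Finset.sum_cons, Finset.prod_cons, chi_add, ih]

/-- All values `±1` summing to the full card forces all values `1`. -/
lemma all_one {α : Type*} [Fintype α] (f : α → ℤ)
    (h1 : ∀ a, f a = 1 ∨ f a = -1)
    (hs : ∑ a : α, f a = (Fintype.card α : ℤ)) : ∀ a, f a = 1 := by
  by_contra hc
  push_neg at hc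
  obtain ⟨a, ha⟩ := hc
  have hlt : ∑ a : α, f a < ∑ _a : α, (1 : ℤ) := by
    refine Finset.sum_lt_sum (fun i _ => ?_) ⟨a, Finset.mem_univ a, ?_⟩
    · rcases h1 i with h | h <;> omega
    · rcases h1 a with h | h; · exact absurd h ha
      omega
  rw [Finset.sum_const, Finset.card_univ, nsmul_eq_mul, mul_one] at hlt
  omega

/-- Sum of an invariant function over a fixed-point-free invariant set is divisible by `p`. -/
lemma dvd_sum_of_no_fixed {α : Type*} [DecidableEq α] {p : ℕ} (hp : p.Prime)
    (e : α → α) (f : α → ℤ) (hf : ∀ x, f (e x) = f x) (hep : ∀ x, e^[p] x = x) :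
    ∀ s : Finset α, (∀ x ∈ s, e x ∈ s) → (∀ x ∈ s, e x ≠ x) → (p : ℤ) ∣ ∑ x ∈ s, f x := by
  have hiter : ∀ (k : ℕ) (x : α), f (e^[k] x) = f x := by
    intro k
    induction k with
    | zero => simp
    | succ k ih => intro x; rw [Function.iterate_succ_apply', hf, ih]
  have hpk : ∀ (k : ℕ) (x : α), e^[p * k] x = x := by
    intro k
    induction k with
    | zero => simp
    | succ k ih =>
      intro x
      rw [Nat.mul_succ, Function.iterate_add_apply, hep, ih]
  have hmod : ∀ (m : ℕ) (x : α), e^[m] x = e^[m % p] x := by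
    intro m x
    conv_lhs => rw [← Nat.div_add_mod m p, Function.iterate_add_apply, hpk]
  intro s
  induction s using Finset.strongInduction with
  | _ s ih =>
    intro hinv hnf
    rcases s.eq_empty_or_nonempty with rfl | ⟨x, hx⟩
    · simp
    · have hppos : 0 < p := hp.pos
      -- the orbit of x
      set O : Finset α := (Finset.range p).image (fun k => e^[k] x) with hO
      have hiter_mem : ∀ k : ℕ, e^[k] x ∈ s := by
        intro k
        induction k with
        | zero => simpa using hx
        | succ k ih2 => rw [Function.iterate_succ_apply']; exact hinv _ ih2
      have hOsub : O ⊆ s := by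
        intro y hy
        rw [hO, Finset.mem_image] at hy
        obtain ⟨k, _, rfl⟩ := hy
        exact hiter_mem k
      have hinj : ∀ a ∈ Finset.range p, ∀ b ∈ Finset.range p,
          e^[a] x = e^[b] x → a = b := by
        have key : ∀ a b : ℕ, a < b → b < p → e^[a] x = e^[b] x → False := by
          intro a b hab hbp heq
          have hper : e^[p - b + a] x = x := by
            have h1 : e^[p - b] (e^[a] x) = e^[p - b] (e^[b] x) := by rw [heq]
            rw [← Function.iterate_add_apply, ← Function.iterate_add_apply] at h1
            have h2 : p - b + b = p := by omega
            rw [h2, hep] at h1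
            exact h1
          have hper' : Function.IsPeriodicPt e (p - b + a) x := hper
          have hd : Function.minimalPeriod e x ∣ (p - b + a) :=
            hper'.minimalPeriod_dvd
          have hdp : Function.minimalPeriod e x ∣ p :=
            Function.IsPeriodicPt.minimalPeriod_dvd (hep x)
          rcases (Nat.Prime.eq_one_or_self_of_dvd hp _ hdp) with h1 | h1
          · have : Function.IsFixedPt e x :=
              Function.minimalPeriod_eq_one_iff_isFixedPt.mp h1
            exact hnf x hx this
          · have hlt : p - b + a < p := by omega
            have hpos : 0 < p - b + a := by omega
            have := Nat.le_of_dvd hpos (h1 ▸ hd)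
            omega
        intro a ha b hb heq
        rw [Finset.mem_range] at ha hb
        rcases lt_trichotomy a b with h | h | h
        · exact absurd (key a b h hb heq) (by simp)
        · exact h
        · exact absurd (key b a h ha heq.symm) (by simp)
      have hOcard : O.card = p := by
        rw [hO, Finset.card_image_of_injOn (fun a ha b hb => hinj a ha b hb),
          Finset.card_range]
      have hxO : x ∈ O := by
        rw [hO, Finset.mem_image]
        exact ⟨0, by simpa using hppos, rfl⟩
      have hOsum : ∑ y ∈ O, f y = p * f x := by
        rw [hO, Finset.sum_image (fun a ha b hb => hinj a ha b hb)]
        rw [Finset.sum_congr rfl (fun k _ => hiter k x), Finset.sum_const,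
          Finset.card_range, nsmul_eq_mul]
      have hssub : s \ O ⊂ s := by
        refine Finset.sdiff_ssubset ?_ ⟨x, hxO⟩
        exact hOsub
      have hinv' : ∀ y ∈ s \ O, e y ∈ s \ O := by
        intro y hy
        rw [Finset.mem_sdiff] at hy ⊢
        refine ⟨hinv y hy.1, ?_⟩
        intro hey
        apply hy.2
        rw [hO, Finset.mem_image] at hey
        obtain ⟨k, hk, hek⟩ := hey
        have : y = e^[p - 1] (e y) := by
          rw [← Function.iterate_succ_apply, (by omega : (p-1).succ = p), hep]
        rw [← hek, ← Function.iterate_add_apply] at this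
        rw [hO, Finset.mem_image]
        exact ⟨(p - 1 + k) % p, by
          rw [Finset.mem_range]; exact Nat.mod_lt _ hppos, by rw [← hmod]; exact this.symm⟩
      have hnf' : ∀ y ∈ s \ O, e y ≠ y := fun y hy =>
        hnf y (Finset.mem_sdiff.mp hy).1
      have ihd := ih _ hssub hinv' hnf'
      have hsplit : ∑ y ∈ s, f y = ∑ y ∈ s \ O, f y + ∑ y ∈ O, f y :=
        (Finset.sum_sdiff hOsub).symm
      rw [hsplit, hOsum]
      exact dvd_add ihd ⟨f x, by push_cast; ring⟩


section Geom

variable (p : ℕ)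

def lo (c : Fin p) : Fin (2*p) := ⟨c.val, by have := c.isLt; omega⟩
def hi (c : Fin p) : Fin (2*p) := ⟨p + c.val, (Nat.add_lt_add_left c.isLt p).trans_le (by omega)⟩

lemma lo_val (c : Fin p) : (lo p c).val = c.val := rfl
lemma hi_val (c : Fin p) : (hi p c).val = p + c.val := rfl

def pairEquiv : (Fin p ⊕ Fin p) ≃ Fin (2*p) where
  toFun := Sum.elim (lo p) (hi p)
  invFun i := if h : i.val < p then .inl ⟨i.val, h⟩
    else .inr ⟨i.val - p, by have := i.isLt; omega⟩
  left_inv s := by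
    rcases s with c | c
    · simp [lo, c.isLt]
    · have : ¬ (p + c.val < p) := by omega
      simp [hi, this]
  right_inv i := by
    dsimp
    split_ifs with h
    · rfl
    · simp only [Sum.elim_inr, hi]
      exact Fin.ext (by simp; omega)

lemma sum_split {M : Type*} [AddCommMonoid M] (g : Fin (2*p) → M) :
    ∑ i, g i = ∑ c : Fin p, (g (lo p c) + g (hi p c)) := by
  rw [← Equiv.sum_comp (pairEquiv p) g, Fintype.sum_sum_type, ← Finset.sum_add_distrib]
  rfl

def EV : (Fin (2*p) → ZMod 2) ≃ (Fin p → ZMod 2 × ZMod 2) where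
  toFun x c := (x (lo p c), x (hi p c))
  invFun v i := if h : i.val < p then (v ⟨i.val, h⟩).1
    else (v ⟨i.val - p, by have := i.isLt; omega⟩).2
  left_inv x := by
    funext i
    dsimp
    split_ifs with h
    · rfl
    · congr 1
      exact Fin.ext (by simp [hi]; omega)
  right_inv v := by
    funext c
    have h1 : (lo p c).val < p := c.isLt
    have h2 : ¬ ((hi p c).val < p) := by simp [hi]
    dsimp
    rw [dif_pos h1, dif_neg h2]
    have e1 : (⟨(lo p c).val, h1⟩ : Fin p) = c := Fin.ext rfl
    have e2 : (⟨(hi p c).val - p, by have := (hi p c).isLt; omega⟩ : Fin p) = c :=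
      Fin.ext (by simp [hi])
    rw [e1, e2]

lemma EV_symm_lo (v : Fin p → ZMod 2 × ZMod 2) (c : Fin p) :
    (EV p).symm v (lo p c) = (v c).1 :=
  congrArg Prod.fst (congrFun ((EV p).apply_symm_apply v) c)

lemma EV_symm_hi (v : Fin p → ZMod 2 × ZMod 2) (c : Fin p) :
    (EV p).symm v (hi p c) = (v c).2 :=
  congrArg Prod.snd (congrFun ((EV p).apply_symm_apply v) c)

end Geom

section Shift

variable (p : ℕ) [NeZero (2*p)]

def MS (S : Finset (Fin (2*p))) : Finset (Finset (Fin (2*p))) :=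
  Finset.univ.image (fun j => S.image (· + j))

def FF (S : Finset (Fin (2*p))) (x : Fin (2*p) → ZMod 2) : ZMod 2 :=
  ∑ T ∈ MS p S, ∏ t ∈ T, x t

def shf (s : Fin (2*p)) (x : Fin (2*p) → ZMod 2) : Fin (2*p) → ZMod 2 :=
  fun i => x (i + s)

lemma image_add_univ (s : Fin (2*p)) : Finset.univ.image (· + s) = Finset.univ := by
  apply Finset.eq_univ_of_forall
  intro i
  rw [Finset.mem_image]
  exact ⟨i - s, Finset.mem_univ _, by ring⟩

lemma MS_shift (S : Finset (Fin (2*p))) (s : Fin (2*p)) :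
    (MS p S).image (fun T => T.image (· + s)) = MS p S := by
  unfold MS
  rw [Finset.image_image]
  have h1 : ((fun T : Finset (Fin (2*p)) => T.image (· + s)) ∘ fun j => S.image (· + j))
      = (fun j : Fin (2*p) => S.image (· + j)) ∘ (· + s) := by
    funext j
    simp only [Function.comp_apply, Finset.image_image]
    apply Finset.image_congr
    intro t _
    show t + j + s = t + (j + s)
    ring
  rw [h1, ← Finset.image_image, image_add_univ]

lemma FF_shift (S : Finset (Fin (2*p))) (s : Fin (2*p)) (x : Fin (2*p) → ZMod 2) :
    FF p S (shf p s x) = FF p S x := by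
  unfold FF shf
  have step1 : ∀ T : Finset (Fin (2*p)), (∏ t ∈ T, x (t + s)) = ∏ t' ∈ T.image (· + s), x t' := by
    intro T
    rw [Finset.prod_image (fun a _ b _ h => by exact add_right_cancel h)]
  calc ∑ T ∈ MS p S, ∏ t ∈ T, x (t + s)
      = ∑ T ∈ MS p S, ∏ t' ∈ T.image (· + s), x t' := Finset.sum_congr rfl (fun T _ => step1 T)
    _ = ∑ T' ∈ (MS p S).image (fun T => T.image (· + s)), ∏ t ∈ T', x t := by
        rw [Finset.sum_image (fun T1 _ T2 _ h => Finset.image_injective (add_left_injective s) h)]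
    _ = ∑ T ∈ MS p S, ∏ t ∈ T, x t := by rw [MS_shift]

end Shift

section Fixed

variable (p : ℕ) [NeZero (2*p)]

def tw : Fin (2*p) := ((2:ℕ) : Fin (2*p))
def one' : Fin (2*p) := ((1:ℕ) : Fin (2*p))

def c0 : Fin (2*p) → ZMod 2 := fun _ => 0
def c1 : Fin (2*p) → ZMod 2 := fun _ => 1
def a01 : Fin (2*p) → ZMod 2 := fun i => ((i.val : ℕ) : ZMod 2)
def a10 : Fin (2*p) → ZMod 2 := fun i => ((i.val : ℕ) : ZMod 2) + 1

lemma tw_val (hp2 : 2 < p) : (tw p).val = 2 := by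
  rw [tw, Fin.val_natCast]; exact Nat.mod_eq_of_lt (by omega)

lemma one'_val (hp2 : 2 < p) : (one' p).val = 1 := by
  rw [one', Fin.val_natCast]; exact Nat.mod_eq_of_lt (by omega)

lemma castmod2p (m : ℕ) : ((m % (2*p) : ℕ) : ZMod 2) = (m : ZMod 2) := by
  conv_rhs => rw [← Nat.div_add_mod m (2*p)]
  push_cast
  rw [show (2 : ZMod 2) = 0 from rfl]
  ring

lemma shf_iterate (s : Fin (2*p)) (k : ℕ) (x : Fin (2*p) → ZMod 2) :
    (shf p s)^[k] x = fun i => x (i + k • s) := by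
  induction k with
  | zero => funext i; simp
  | succ k ih =>
    rw [Function.iterate_succ_apply', ih]
    funext i
    show x ((i + s) + k • s) = x (i + (k+1) • s)
    congr 1
    rw [succ_nsmul]
    ring

lemma shf_period (x : Fin (2*p) → ZMod 2) : (shf p (tw p))^[p] x = x := by
  rw [shf_iterate]
  funext i
  have : p • (tw p) = 0 := by
    rw [nsmul_eq_mul, tw, ← Nat.cast_mul, (by ring : p * 2 = 2*p), Fin.natCast_self]
  rw [this, add_zero]

lemma fixed_char (hp2 : 2 < p) (x : Fin (2*p) → ZMod 2) (hx : shf p (tw p) x = x) :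
    ∀ n (h : n < 2*p), x ⟨n, h⟩ = x ⟨n % 2, by omega⟩ := by
  intro n
  induction n using Nat.strong_induction_on with
  | _ n ih =>
    intro h
    rcases lt_or_ge n 2 with h2 | h2
    · congr 1
      exact Fin.ext (by simp [Nat.mod_eq_of_lt h2])
    · have hstep : x ⟨n, h⟩ = x ⟨n - 2, by omega⟩ := by
        have hc := congrFun hx ⟨n - 2, by omega⟩
        have harg : (⟨n - 2, by omega⟩ : Fin (2*p)) + tw p = ⟨n, h⟩ := by
          apply Fin.ext
          rw [Fin.add_def]
          show ((n-2) + (tw p).val) % (2*p) = n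
          rw [tw_val p hp2]
          rw [Nat.mod_eq_of_lt (by omega)]
          omega
        rw [← hc]
        show x _ = x _
        rw [harg]
      rw [hstep, ih (n-2) (by omega) (by omega)]
      congr 1
      exact Fin.ext (by simp; omega)

lemma cast2 (n : ℕ) : ((n : ℕ) : ZMod 2) = ((n % 2 : ℕ) : ZMod 2) :=
  (ZMod.natCast_mod n 2).symm

lemma fixed_set (hp2 : 2 < p) :
    Finset.univ.filter (fun x : Fin (2*p) → ZMod 2 => shf p (tw p) x = x)
      = {c0 p, c1 p, a01 p, a10 p} := by
  apply Finset.ext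
  intro x
  simp only [Finset.mem_filter, Finset.mem_univ, true_and, Finset.mem_insert,
    Finset.mem_singleton]
  constructor
  · intro hx
    have hchar := fixed_char p hp2 x hx
    have hz : ∀ a : ZMod 2, a = 0 ∨ a = 1 := by decide
    have hi : ∀ i : Fin (2*p), x i = x ⟨i.val % 2, by omega⟩ :=
      fun i => hchar i.val i.isLt
    have k0 : ∀ i : Fin (2*p), i.val % 2 = 0 →
        x i = x ⟨0, by omega⟩ := by
      intro i hpar
      rw [hi i, show (⟨i.val % 2, by omega⟩ : Fin (2*p)) = ⟨0, by omega⟩ from Fin.ext hpar]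
    have k1 : ∀ i : Fin (2*p), i.val % 2 = 1 →
        x i = x ⟨1, by omega⟩ := by
      intro i hpar
      rw [hi i, show (⟨i.val % 2, by omega⟩ : Fin (2*p)) = ⟨1, by omega⟩ from Fin.ext hpar]
    have ha01 : ∀ i : Fin (2*p), a01 p i = ((i.val % 2 : ℕ) : ZMod 2) := by
      intro i; rw [a01]; exact cast2 _
    have ha10 : ∀ i : Fin (2*p), a10 p i = ((i.val % 2 : ℕ) : ZMod 2) + 1 := by
      intro i; rw [a10, cast2]
    rcases hz (x ⟨0, by omega⟩) with h0 | h0 <;> rcases hz (x ⟨1, by omega⟩) with h1 | h1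
    · left
      funext i
      rcases Nat.mod_two_eq_zero_or_one i.val with hpar | hpar
      · rw [k0 i hpar, h0]; rfl
      · rw [k1 i hpar, h1]; rfl
    · right; right; left
      funext i
      rcases Nat.mod_two_eq_zero_or_one i.val with hpar | hpar
      · rw [k0 i hpar, h0, ha01 i, hpar]; rfl
      · rw [k1 i hpar, h1, ha01 i, hpar]; rfl
    · right; right; right
      funext i
      rcases Nat.mod_two_eq_zero_or_one i.val with hpar | hpar
      · rw [k0 i hpar, h0, ha10 i, hpar]; rfl
      · rw [k1 i hpar, h1, ha10 i, hpar]; rfl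
    · right; left
      funext i
      rcases Nat.mod_two_eq_zero_or_one i.val with hpar | hpar
      · rw [k0 i hpar, h0]; rfl
      · rw [k1 i hpar, h1]; rfl
  · intro hx
    have hval : ∀ i : Fin (2*p), (i + tw p).val = (i.val + 2) % (2*p) := by
      intro i
      rw [Fin.add_def, tw_val p hp2]
    have key : ∀ i : Fin (2*p), (((i + tw p).val : ℕ) : ZMod 2) = ((i.val : ℕ) : ZMod 2) := by
      intro i
      rw [hval i, castmod2p]
      push_cast
      rw [show (2 : ZMod 2) = 0 from rfl]
      ring
    rcases hx with rfl | rfl | rfl | rfl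
    · rfl
    · rfl
    · funext i
      show a01 p (i + tw p) = a01 p i
      rw [a01, a01]
      exact key i
    · funext i
      show a10 p (i + tw p) = a10 p i
      rw [a10, a10, key i]

end Fixed

section Phase1

variable (p : ℕ) [NeZero (2*p)]

def pihalf : Fin (2*p) := ((p:ℕ) : Fin (2*p))

def dotp (w x : Fin (2*p) → ZMod 2) : ZMod 2 := ∑ i, w i * x i

def WW (S : Finset (Fin (2*p))) (w : Fin (2*p) → ZMod 2) : ℤ :=
  ∑ x : Fin (2*p) → ZMod 2, chi (FF p S x + dotp p w x)

lemma FF_c0 (S : Finset (Fin (2*p))) (hS : S.Nonempty) : FF p S (c0 p) = 0 := by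
  apply Finset.sum_eq_zero
  intro T hT
  rw [MS, Finset.mem_image] at hT
  obtain ⟨j, _, rfl⟩ := hT
  obtain ⟨t, ht⟩ := hS
  exact Finset.prod_eq_zero (Finset.mem_image_of_mem _ ht) rfl

lemma FF_c1 (S : Finset (Fin (2*p))) : FF p S (c1 p) = ((MS p S).card : ZMod 2) := by
  unfold FF
  calc ∑ T ∈ MS p S, ∏ t ∈ T, c1 p t = ∑ _T ∈ MS p S, (1:ZMod 2) :=
        Finset.sum_congr rfl (fun T _ => Finset.prod_const_one)
    _ = _ := by rw [Finset.sum_const, nsmul_eq_mul, mul_one]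

lemma a10_shf (hp2 : 2 < p) : a10 p = shf p (one' p) (a01 p) := by
  funext i
  show ((i.val : ℕ) : ZMod 2) + 1 = (((i + one' p).val : ℕ) : ZMod 2)
  rw [Fin.val_add, one'_val p hp2, castmod2p]
  push_cast
  ring

lemma FF_a10_eq (hp2 : 2 < p) (S : Finset (Fin (2*p))) :
    FF p S (a10 p) = FF p S (a01 p) := by
  rw [a10_shf p hp2, FF_shift]

lemma shf_injective (s : Fin (2*p)) : Function.Injective (shf p s) := by
  intro x y h
  funext j
  have := congrFun h (j - s)
  simpa [shf, sub_add_cancel] using this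

lemma podd_cast (hodd : p % 2 = 1) : ((p:ℕ) : ZMod 2) = 1 := by
  rw [cast2 p, hodd]
  decide

lemma sum_c1 : ∑ i : Fin (2*p), c1 p i = 0 := by
  rw [show (fun i => c1 p i) = fun _ : Fin (2*p) => (1 : ZMod 2) from rfl, Finset.sum_const,
    Finset.card_univ, Fintype.card_fin, nsmul_eq_mul, mul_one, Nat.cast_mul,
    show ((2:ℕ) : ZMod 2) = 0 from rfl, zero_mul]

lemma sum_a01 (hodd : p % 2 = 1) : ∑ i, a01 p i = 1 := by
  rw [sum_split p (a01 p)]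
  have hc : ∀ c : Fin p, a01 p (lo p c) + a01 p (hi p c) = 1 := by
    intro c
    rw [a01, a01, lo_val, hi_val]
    push_cast
    rw [podd_cast p hodd]
    ring_nf
    rw [show (2 : ZMod 2) = 0 from rfl]
    ring
  rw [Finset.sum_congr rfl (fun c _ => hc c), Finset.sum_const, Finset.card_univ,
    Fintype.card_fin, nsmul_eq_mul, mul_one, podd_cast p hodd]

lemma sum_a10 (hodd : p % 2 = 1) : ∑ i, a10 p i = 1 := by
  have : ∀ i : Fin (2*p), a10 p i = a01 p i + 1 := fun i => rfl
  rw [Finset.sum_congr rfl (fun i _ => this i), Finset.sum_add_distrib, sum_a01 p hodd]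
  rw [show (fun i : Fin (2*p) => (1:ZMod 2)) = fun i => c1 p i from rfl, sum_c1]
  ring

lemma four_ne (hp2 : 2 < p) :
    c0 p ≠ c1 p ∧ c0 p ≠ a01 p ∧ c0 p ≠ a10 p ∧ c1 p ≠ a01 p ∧ c1 p ≠ a10 p ∧
      a01 p ≠ a10 p := by
  refine ⟨fun h => ?_, fun h => ?_, fun h => ?_, fun h => ?_, fun h => ?_, fun h => ?_⟩
  · have h' : (0 : ZMod 2) = 1 := congrFun h ⟨0, by omega⟩
    exact absurd h' (by decide)
  · have h' : (0 : ZMod 2) = ((1:ℕ) : ZMod 2) := congrFun h ⟨1, by omega⟩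
    exact absurd h' (by decide)
  · have h' : (0 : ZMod 2) = ((0:ℕ) : ZMod 2) + 1 := congrFun h ⟨0, by omega⟩
    exact absurd h' (by decide)
  · have h' : (1 : ZMod 2) = ((0:ℕ) : ZMod 2) := congrFun h ⟨0, by omega⟩
    exact absurd h' (by decide)
  · have h' : (1 : ZMod 2) = ((1:ℕ) : ZMod 2) + 1 := congrFun h ⟨1, by omega⟩
    exact absurd h' (by decide)
  · have h' : ((0:ℕ) : ZMod 2) = ((0:ℕ) : ZMod 2) + 1 := congrFun h ⟨0, by omega⟩
    exact absurd h' (by decide)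

lemma count_four (hp : p.Prime) (hp2 : 2 < p) (S : Finset (Fin (2*p)))
    (w : Fin (2*p) → ZMod 2) (hw : ∀ x, dotp p w (shf p (tw p) x) = dotp p w x) :
    ∃ z : ℤ, WW p S w =
      (chi (FF p S (c0 p) + dotp p w (c0 p)) + chi (FF p S (c1 p) + dotp p w (c1 p)) +
        chi (FF p S (a01 p) + dotp p w (a01 p)) + chi (FF p S (a10 p) + dotp p w (a10 p)))
      + p * z := by
  classical
  set e : (Fin (2*p) → ZMod 2) → (Fin (2*p) → ZMod 2) := shf p (tw p) with he
  set f : (Fin (2*p) → ZMod 2) → ℤ := fun x => chi (FF p S x + dotp p w x) with hf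
  have hfinv : ∀ x, f (e x) = f x := by
    intro x
    simp only [hf, he]
    rw [FF_shift, hw]
  have hinv : ∀ x ∈ Finset.univ.filter (fun x => ¬ e x = x),
      e x ∈ Finset.univ.filter (fun x => ¬ e x = x) := by
    intro x hx
    rw [Finset.mem_filter] at hx ⊢
    refine ⟨Finset.mem_univ _, fun hexx => hx.2 ?_⟩
    exact shf_injective p (tw p) hexx
  have hnf : ∀ x ∈ Finset.univ.filter (fun x => ¬ e x = x), e x ≠ x :=
    fun x hx => (Finset.mem_filter.mp hx).2
  obtain ⟨z, hz⟩ := dvd_sum_of_no_fixed hp e f hfinv (shf_period p) _ hinv hnf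
  refine ⟨z, ?_⟩
  have hsplit := Finset.sum_filter_add_sum_filter_not Finset.univ (fun x => e x = x) f
  have hWW : WW p S w = ∑ x ∈ Finset.univ.filter (fun x => e x = x), f x +
      ∑ x ∈ Finset.univ.filter (fun x => ¬ e x = x), f x := by
    rw [hsplit]; rfl
  rw [hWW, hz, fixed_set p hp2]
  obtain ⟨d1, d2, d3, d4, d5, d6⟩ := four_ne p hp2
  rw [Finset.sum_insert (by simp [d1, d2, d3]), Finset.sum_insert (by simp [d4, d5]),
    Finset.sum_insert (by simp [d6]), Finset.sum_singleton]
  push_cast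
  ring

lemma MS_card_odd (hp : p.Prime) (hp2 : 2 < p) (S : Finset (Fin (2*p)))
    (hS0 : S.Nonempty)
    (h0 : WW p S (fun _ => 0) = 2^p ∨ WW p S (fun _ => 0) = -(2^p))
    (h1 : WW p S (fun _ => 1) = 2^p ∨ WW p S (fun _ => 1) = -(2^p)) :
    ((MS p S).card : ZMod 2) = 1 := by
  have hodd : p % 2 = 1 := by
    rcases Nat.Prime.eq_two_or_odd hp with h | h
    · omega
    · exact h
  obtain ⟨z0, hz0⟩ := count_four p hp hp2 S (fun _ => 0) (by intro x; simp [dotp])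
  obtain ⟨z1, hz1⟩ := count_four p hp hp2 S (fun _ => 1) (by
    intro x
    show ∑ i, 1 * (shf p (tw p) x) i = ∑ i, 1 * x i
    simp only [one_mul]
    exact Equiv.sum_comp (Equiv.addRight (tw p)) x)
  have hdot0 : ∀ y : Fin (2*p) → ZMod 2, dotp p (fun _ => 0) y = 0 := by
    intro y; simp [dotp]
  have hdot1 : ∀ y : Fin (2*p) → ZMod 2, dotp p (fun _ => 1) y = ∑ i, y i := by
    intro y; simp [dotp]
  rw [hdot0, hdot0, hdot0, hdot0, FF_c0 p S hS0, FF_c1, FF_a10_eq p hp2] at hz0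
  rw [hdot1, hdot1, hdot1, hdot1, FF_c0 p S hS0, FF_c1, FF_a10_eq p hp2,
    show ∑ i, c0 p i = 0 by simp [c0], sum_c1, sum_a01 p hodd, sum_a10 p hodd] at hz1
  set M : ZMod 2 := ((MS p S).card : ZMod 2) with hM
  set A : ZMod 2 := FF p S (a01 p) with hA
  by_contra hMne
  have hM0 : M = 0 := by
    have : ∀ a : ZMod 2, a ≠ 1 → a = 0 := by decide
    exact this M hMne
  rw [hM0] at hz0 hz1
  simp only [add_zero, chi_zero] at hz0 hz1
  rw [chi_add, chi_one] at hz1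
  have hple : ¬ ((p:ℤ) ∣ 2^p) := by
    intro hdvd
    have h2 : (p:ℤ) ∣ ((2^p : ℕ) : ℤ) := by push_cast; exact hdvd
    have h3 : p ∣ 2^p := Int.natCast_dvd_natCast.mp h2
    have h4 : p ∣ 2 := Nat.Prime.dvd_of_dvd_pow hp h3
    have := Nat.le_of_dvd (by norm_num) h4
    omega
  rcases chi_cases A with hcA | hcA
  · rw [hcA] at hz1
    have hz1' : WW p S (fun _ => 1) = p * z1 := by rw [hz1]; ring
    rcases h1 with h | h <;> rw [hz1'] at h
    · exact hple ⟨z1, h.symm⟩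
    · exact hple ⟨-z1, by rw [mul_neg, h, neg_neg]⟩
  · rw [hcA] at hz0
    have hz0' : WW p S (fun _ => 0) = p * z0 := by rw [hz0]; ring
    rcases h0 with h | h <;> rw [hz0'] at h
    · exact hple ⟨z0, h.symm⟩
    · exact hple ⟨-z0, by rw [mul_neg, h, neg_neg]⟩

lemma S_pi_invariant (hp2 : 2 < p) (S : Finset (Fin (2*p)))
    (hM : ((MS p S).card : ZMod 2) = 1) : S.image (· + pihalf p) = S := by
  by_contra hne
  have hpi2 : pihalf p + pihalf p = 0 := by
    rw [pihalf, ← Nat.cast_add, show p + p = 2*p from by ring, Fin.natCast_self]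
  have gmem : ∀ T ∈ MS p S, T.image (· + pihalf p) ∈ MS p S := by
    intro T hT
    have hT' : T ∈ Finset.univ.image (fun j : Fin (2*p) => S.image (· + j)) := hT
    obtain ⟨j, _, rfl⟩ := Finset.mem_image.mp hT'
    show _ ∈ Finset.univ.image (fun j : Fin (2*p) => S.image (· + j))
    refine Finset.mem_image.mpr ⟨j + pihalf p, Finset.mem_univ _, ?_⟩
    rw [Finset.image_image]
    apply Finset.image_congr
    intro t _
    show t + (j + pihalf p) = t + j + pihalf p
    ring
  have gginv : ∀ T : Finset (Fin (2*p)), (T.image (· + pihalf p)).image (· + pihalf p) = T := by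
    intro T
    rw [Finset.image_image]
    have hc : ((· + pihalf p) ∘ (· + pihalf p)) = fun t : Fin (2*p) => t + (pihalf p + pihalf p) := by
      funext t
      show t + pihalf p + pihalf p = _
      ring
    rw [hc, hpi2]
    simp
  have gne : ∀ T ∈ MS p S, T.image (· + pihalf p) ≠ T := by
    intro T hT
    have hT' : T ∈ Finset.univ.image (fun j : Fin (2*p) => S.image (· + j)) := hT
    obtain ⟨j, _, rfl⟩ := Finset.mem_image.mp hT'
    intro heq
    apply hne
    have hcomm : (S.image (· + pihalf p)).image (· + j) = (S.image (· + j)).image (· + pihalf p) := by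
      rw [Finset.image_image, Finset.image_image]
      apply Finset.image_congr
      intro t _
      show t + pihalf p + j = t + j + pihalf p
      ring
    have h2 : (S.image (· + pihalf p)).image (· + j) = S.image (· + j) := by rw [hcomm, heq]
    exact Finset.image_injective (add_left_injective j) h2
  have hsum : ∑ _T ∈ MS p S, (1 : ZMod 2) = 0 :=
    Finset.sum_involution (fun T _ => T.image (· + pihalf p)) (fun a _ => by decide)
      (fun T hT _ => gne T hT) (fun T hT => gmem T hT) (fun T hT => gginv T)
  rw [Finset.sum_const, nsmul_eq_mul, mul_one, hM] at hsum
  exact absurd hsum (by decide)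

end Phase1

section Phase2

variable (p : ℕ) [NeZero (2*p)]

lemma ppos : 0 < p := by
  have := NeZero.ne (2*p)
  omega

lemma pihalf_val : (pihalf p).val = p := by
  rw [pihalf, Fin.val_natCast]
  exact Nat.mod_eq_of_lt (by have := ppos p; omega)

lemma lo_add (c : Fin p) : lo p c + pihalf p = hi p c := by
  apply Fin.ext
  rw [Fin.val_add, pihalf_val, lo_val, hi_val]
  have := c.isLt
  rw [Nat.mod_eq_of_lt (by omega)]
  omega

lemma hi_add (c : Fin p) : hi p c + pihalf p = lo p c := by
  apply Fin.ext
  rw [Fin.val_add, pihalf_val, hi_val, lo_val]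
  have := c.isLt
  have h2 : p + c.val + p = 2*p + c.val := by ring
  rw [h2, Nat.add_mod_left, Nat.mod_eq_of_lt (by omega)]

def CT (T : Finset (Fin (2*p))) : Finset (Fin p) :=
  Finset.univ.filter (fun c => lo p c ∈ T)

lemma mem_of_inv {T : Finset (Fin (2*p))} (hT : T.image (· + pihalf p) = T)
    {t : Fin (2*p)} (ht : t ∈ T) : t + pihalf p ∈ T := by
  rw [← hT]
  exact Finset.mem_image_of_mem _ ht

lemma mem_hi_iff {T : Finset (Fin (2*p))} (hT : T.image (· + pihalf p) = T)
    (c : Fin p) : hi p c ∈ T ↔ lo p c ∈ T := by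
  constructor
  · intro h
    have := mem_of_inv p hT h
    rwa [hi_add] at this
  · intro h
    have := mem_of_inv p hT h
    rwa [lo_add] at this

lemma CT_nonempty {T : Finset (Fin (2*p))} (hT : T.image (· + pihalf p) = T)
    (hne : T.Nonempty) : (CT p T).Nonempty := by
  obtain ⟨t, ht⟩ := hne
  rcases lt_or_ge t.val p with h | h
  · refine ⟨⟨t.val, h⟩, ?_⟩
    rw [CT, Finset.mem_filter]
    refine ⟨Finset.mem_univ _, ?_⟩
    rwa [show lo p ⟨t.val, h⟩ = t from Fin.ext rfl]
  · have hlt := t.isLt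
    refine ⟨⟨t.val - p, by omega⟩, ?_⟩
    rw [CT, Finset.mem_filter]
    refine ⟨Finset.mem_univ _, ?_⟩
    rw [← mem_hi_iff p hT]
    rwa [show hi p ⟨t.val - p, by omega⟩ = t from Fin.ext (show p + (t.val - p) = t.val by omega)]

lemma prod_invariant {T : Finset (Fin (2*p))} (hT : T.image (· + pihalf p) = T)
    (x : Fin (2*p) → ZMod 2) :
    ∏ t ∈ T, x t = ∏ c ∈ CT p T, (x (lo p c) * x (hi p c)) := by
  have hdisj : Disjoint ((CT p T).image (lo p)) ((CT p T).image (hi p)) := by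
    rw [Finset.disjoint_left]
    intro a ha hb
    obtain ⟨c, _, rfl⟩ := Finset.mem_image.mp ha
    obtain ⟨d, _, hd⟩ := Finset.mem_image.mp hb
    have h1 := congrArg Fin.val hd
    rw [hi_val, lo_val] at h1
    have := c.isLt
    omega
  have hun : T = ((CT p T).image (lo p)) ∪ ((CT p T).image (hi p)) := by
    apply Finset.ext
    intro t
    constructor
    · intro ht
      rcases lt_or_ge t.val p with h | h
      · apply Finset.mem_union_left
        refine Finset.mem_image.mpr ⟨⟨t.val, h⟩, ?_, Fin.ext rfl⟩
        rw [CT, Finset.mem_filter]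
        refine ⟨Finset.mem_univ _, ?_⟩
        rwa [show lo p ⟨t.val, h⟩ = t from Fin.ext rfl]
      · apply Finset.mem_union_right
        have hlt := t.isLt
        have hhi : hi p ⟨t.val - p, by omega⟩ = t :=
          Fin.ext (show p + (t.val - p) = t.val by omega)
        refine Finset.mem_image.mpr ⟨⟨t.val - p, by omega⟩, ?_, hhi⟩
        rw [CT, Finset.mem_filter]
        refine ⟨Finset.mem_univ _, ?_⟩
        rw [← mem_hi_iff p hT, hhi]
        exact ht
    · intro ht
      rcases Finset.mem_union.mp ht with h | h
      · obtain ⟨c, hc, rfl⟩ := Finset.mem_image.mp h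
        exact (Finset.mem_filter.mp hc).2
      · obtain ⟨c, hc, rfl⟩ := Finset.mem_image.mp h
        exact (mem_hi_iff p hT c).mpr (Finset.mem_filter.mp hc).2
  have hloinj : ∀ a ∈ CT p T, ∀ b ∈ CT p T, lo p a = lo p b → a = b := by
    intro a _ b _ h
    have h1 : (lo p a).val = (lo p b).val := congrArg Fin.val h
    rw [lo_val, lo_val] at h1
    exact Fin.ext h1
  have hhiinj : ∀ a ∈ CT p T, ∀ b ∈ CT p T, hi p a = hi p b → a = b := by
    intro a _ b _ h
    have := congrArg Fin.val h
    rw [hi_val, hi_val] at this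
    exact Fin.ext (by omega)
  conv_lhs => rw [hun]
  rw [Finset.prod_union hdisj, Finset.prod_image hloinj, Finset.prod_image hhiinj,
    ← Finset.prod_mul_distrib]

lemma T_invariant (S : Finset (Fin (2*p))) (hS : S.image (· + pihalf p) = S) :
    ∀ T ∈ MS p S, T.image (· + pihalf p) = T := by
  intro T hT
  have hT' : T ∈ Finset.univ.image (fun j : Fin (2*p) => S.image (· + j)) := hT
  obtain ⟨j, _, rfl⟩ := Finset.mem_image.mp hT'
  rw [Finset.image_image]
  have hc : ((· + pihalf p) ∘ (· + j)) = ((· + j) ∘ (· + pihalf p)) := by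
    funext t
    show t + j + pihalf p = t + pihalf p + j
    ring
  rw [hc, ← Finset.image_image, hS]

def GG (S : Finset (Fin (2*p))) (v : Fin p → ZMod 2) : ZMod 2 :=
  ∑ T ∈ MS p S, ∏ c ∈ CT p T, v c

def uu (x : Fin (2*p) → ZMod 2) : Fin p → ZMod 2 :=
  fun c => x (lo p c) * x (hi p c)

lemma FF_eq (S : Finset (Fin (2*p))) (hS : S.image (· + pihalf p) = S)
    (x : Fin (2*p) → ZMod 2) : FF p S x = GG p S (uu p x) :=
  Finset.sum_congr rfl (fun T hT => prod_invariant p (T_invariant p S hS T hT) x)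

lemma GG_zero (S : Finset (Fin (2*p))) (hS0 : S.Nonempty)
    (hS : S.image (· + pihalf p) = S) : GG p S (fun _ => 0) = 0 := by
  apply Finset.sum_eq_zero
  intro T hT
  have hTne : T.Nonempty := by
    have hT' : T ∈ Finset.univ.image (fun j : Fin (2*p) => S.image (· + j)) := hT
    obtain ⟨j, _, rfl⟩ := Finset.mem_image.mp hT'
    exact hS0.image _
  obtain ⟨c, hc⟩ := CT_nonempty p (T_invariant p S hS T hT) hTne
  exact Finset.prod_eq_zero hc rfl

lemma uu_EV (v : Fin p → ZMod 2 × ZMod 2) :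
    uu p ((EV p).symm v) = fun c => (v c).1 * (v c).2 := by
  funext c
  rw [uu, EV_symm_lo, EV_symm_hi]

lemma fib_sum : ∀ a : ZMod 2,
    (∑ ab ∈ Finset.univ.filter (fun ab : ZMod 2 × ZMod 2 => ab.1 * ab.2 = a),
      chi (ab.1 + ab.2)) = -chi a := by decide

lemma pair_sum : ∀ α β : ZMod 2,
    (∑ ab : ZMod 2 × ZMod 2, chi (ab.1 * ab.2 + α * ab.1 + β * ab.2)) = 2 * chi (α * β) := by
  decide

lemma GG_linear (hp : p.Prime) (hp2 : 2 < p) (S : Finset (Fin (2*p)))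
    (hS0 : S.Nonempty) (hS : S.image (· + pihalf p) = S)
    (h1 : WW p S (fun _ => 1) = 2^p ∨ WW p S (fun _ => 1) = -(2^p)) :
    ∀ v : Fin p → ZMod 2, GG p S v = ∑ c, v c := by
  classical
  have hodd : Odd p := by
    rcases hp.eq_two_or_odd' with h | h
    · omega
    · exact h
  set g : (Fin p → ZMod 2 × ZMod 2) → (Fin p → ZMod 2) :=
    fun vh => fun c => (vh c).1 * (vh c).2 with hg
  -- Step 1: express WW at all-ones through the pairing
  have step1 : WW p S (fun _ => 1)
      = ∑ vh : Fin p → ZMod 2 × ZMod 2,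
          chi (GG p S (g vh)) * ∏ c, chi ((vh c).1 + (vh c).2) := by
    rw [WW, ← Equiv.sum_comp ((EV p).symm)
      (fun x => chi (FF p S x + dotp p (fun _ => 1) x))]
    apply Finset.sum_congr rfl
    intro vh _
    have hFF : FF p S ((EV p).symm vh) = GG p S (g vh) := by
      rw [FF_eq p S hS, uu_EV]
    have hdot : dotp p (fun _ => 1) ((EV p).symm vh) = ∑ c, ((vh c).1 + (vh c).2) := by
      rw [dotp]
      simp only [one_mul]
      rw [sum_split p]
      apply Finset.sum_congr rfl
      intro c _
      rw [EV_symm_lo, EV_symm_hi]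
    rw [hFF, hdot, chi_add, chi_sum]
  -- Step 2: fiberwise over the value of g
  have step2 : WW p S (fun _ => 1)
      = ∑ v : Fin p → ZMod 2, chi (GG p S v) *
          (∑ vh ∈ Finset.univ.filter (fun vh => g vh = v), ∏ c, chi ((vh c).1 + (vh c).2)) := by
    rw [step1, ← Finset.sum_fiberwise Finset.univ g
      (fun vh => chi (GG p S (g vh)) * ∏ c, chi ((vh c).1 + (vh c).2))]
    apply Finset.sum_congr rfl
    intro v _
    rw [Finset.mul_sum]
    apply Finset.sum_congr rfl
    intro vh hvh
    rw [(Finset.mem_filter.mp hvh).2]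
  -- Step 3: compute the fiber sums
  have step3 : ∀ v : Fin p → ZMod 2,
      (∑ vh ∈ Finset.univ.filter (fun vh => g vh = v), ∏ c, chi ((vh c).1 + (vh c).2))
        = - chi (∑ c, v c) := by
    intro v
    have hfib : Finset.univ.filter (fun vh => g vh = v)
        = Fintype.piFinset (fun c => Finset.univ.filter (fun ab : ZMod 2 × ZMod 2 => ab.1 * ab.2 = v c)) := by
      apply Finset.ext
      intro vh
      rw [Finset.mem_filter, Fintype.mem_piFinset]
      constructor
      · intro hvh c
        rw [Finset.mem_filter]
        exact ⟨Finset.mem_univ _, congrFun hvh.2 c⟩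
      · intro hc
        refine ⟨Finset.mem_univ _, funext fun c => ?_⟩
        exact (Finset.mem_filter.mp (hc c)).2
    rw [hfib, ← Finset.prod_univ_sum
      (fun c => Finset.univ.filter (fun ab : ZMod 2 × ZMod 2 => ab.1 * ab.2 = v c))
      (fun _ ab => chi (ab.1 + ab.2))]
    rw [Finset.prod_congr rfl (fun c (_ : c ∈ Finset.univ) => fib_sum (v c))]
    have hneg : ∀ c : Fin p, -chi (v c) = (-1) * chi (v c) := fun c => by ring
    rw [Finset.prod_congr rfl (fun c (_ : c ∈ Finset.univ) => hneg c), Finset.prod_mul_distrib,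
      Finset.prod_const, Finset.card_univ, Fintype.card_fin, hodd.neg_one_pow, chi_sum]
    ring
  -- Step 4: total sum identity
  have step4 : (∑ v : Fin p → ZMod 2, chi (GG p S v + ∑ c, v c)) = - WW p S (fun _ => 1) := by
    have e1 : WW p S (fun _ => 1) = ∑ v : Fin p → ZMod 2, -(chi (GG p S v + ∑ c, v c)) := by
      rw [step2]
      apply Finset.sum_congr rfl
      intro v _
      rw [step3 v, chi_add]
      ring
    rw [e1, Finset.sum_neg_distrib, neg_neg]
  have hcard : Fintype.card (Fin p → ZMod 2) = 2^p := by
    rw [Fintype.card_fun, ZMod.card, Fintype.card_fin]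
  rcases h1 with h | h
  · -- WW = 2^p ⇒ total = -2^p : impossible, value at v = 0 is +1
    exfalso
    rw [h] at step4
    have hall : ∀ v : Fin p → ZMod 2, - chi (GG p S v + ∑ c, v c) = 1 := by
      apply all_one
      · intro v
        rcases chi_cases (GG p S v + ∑ c, v c) with h' | h' <;> rw [h'] <;> norm_num
      · rw [Finset.sum_neg_distrib, step4, hcard]
        push_cast
        ring
    have h0 := hall (fun _ => 0)
    have h0' : -chi ((GG p S fun _ => 0) + ∑ _c : Fin p, (0:ZMod 2)) = 1 := h0
    rw [GG_zero p S hS0 hS] at h0'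
    simp [chi] at h0' 
  · -- WW = -2^p ⇒ total = 2^p : all terms are 1
    rw [h, neg_neg] at step4
    have hall : ∀ v : Fin p → ZMod 2, chi (GG p S v + ∑ c, v c) = 1 := by
      apply all_one
      · intro v; exact chi_cases _
      · rw [step4, hcard]
        push_cast
        ring
    intro v
    have hs := chi_eq_one _ (hall v)
    have himp : ∀ a b : ZMod 2, a + b = 0 → a = b := by decide
    exact himp _ _ hs

end Phase2

section Final

variable (p : ℕ) [NeZero (2*p)]

lemma backward (S : Finset (Fin (2*p)))
    (hF : ∀ x, FF p S x = ∑ c, uu p x c) (w : Fin (2*p) → ZMod 2) :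
    WW p S w = 2^p ∨ WW p S w = -(2^p) := by
  classical
  have step1 : WW p S w = ∑ vh : Fin p → ZMod 2 × ZMod 2,
      ∏ c, chi ((vh c).1 * (vh c).2 + (w (lo p c) * (vh c).1 + w (hi p c) * (vh c).2)) := by
    rw [WW, ← Equiv.sum_comp ((EV p).symm) (fun x => chi (FF p S x + dotp p w x))]
    apply Finset.sum_congr rfl
    intro vh _
    have hFF : FF p S ((EV p).symm vh) = ∑ c, (vh c).1 * (vh c).2 := by
      rw [hF ((EV p).symm vh), uu_EV]
    have hdot : dotp p w ((EV p).symm vh)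
        = ∑ c, (w (lo p c) * (vh c).1 + w (hi p c) * (vh c).2) := by
      rw [dotp, sum_split p (fun i => w i * (EV p).symm vh i)]
      apply Finset.sum_congr rfl
      intro c _
      rw [EV_symm_lo, EV_symm_hi]
    rw [hFF, hdot, ← Finset.sum_add_distrib, chi_sum]
  have step2 : WW p S w
      = ∏ c : Fin p, ∑ ab : ZMod 2 × ZMod 2,
          chi (ab.1 * ab.2 + (w (lo p c) * ab.1 + w (hi p c) * ab.2)) := by
    rw [step1]
    have hpu := Finset.prod_univ_sum (fun _ : Fin p => (Finset.univ : Finset (ZMod 2 × ZMod 2)))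
      (fun c ab => chi (ab.1 * ab.2 + (w (lo p c) * ab.1 + w (hi p c) * ab.2)))
    rw [hpu, Fintype.piFinset_univ]
  have step3 : WW p S w = 2^p * chi (∑ c, w (lo p c) * w (hi p c)) := by
    rw [step2]
    have hps : ∀ c : Fin p, (∑ ab : ZMod 2 × ZMod 2,
        chi (ab.1 * ab.2 + (w (lo p c) * ab.1 + w (hi p c) * ab.2)))
          = 2 * chi (w (lo p c) * w (hi p c)) := by
      intro c
      have := pair_sum (w (lo p c)) (w (hi p c))
      rw [← this]
      apply Finset.sum_congr rfl
      intro ab _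
      congr 1
      ring
    rw [Finset.prod_congr rfl (fun c (_ : c ∈ Finset.univ) => hps c), Finset.prod_mul_distrib,
      Finset.prod_const, Finset.card_univ, Fintype.card_fin, chi_sum]
  rcases chi_cases (∑ c, w (lo p c) * w (hi p c)) with h | h
  · left
    rw [step3, h, mul_one]
  · right
    rw [step3, h]
    ring

end Final
end Stmt17

/-- For `n = 2p`, `p > 2` prime, the only bent (homogeneous) MRS
Boolean function in `n` variables is `f₀ = ⊕_{i=0}^{p-1} x_i x_{p+i}`: an MRS function
(sum of all distinct cyclic shifts of a monomial containing `x₀`) is bent iff it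
equals `f₀`. -/
theorem stmt17 (p : ℕ) (hp : p.Prime) (hp2 : 2 < p) (S : Finset (Fin (2*p)))
    (hS0 : (⟨0, by omega⟩ : Fin (2*p)) ∈ S) :
    (∀ w : Fin (2*p) → ZMod 2,
      (∑ x : Fin (2*p) → ZMod 2,
        (-1 : ℤ) ^ (((∑ T ∈ Finset.univ.image (fun j : Fin (2*p) => S.image (· + j)),
            ∏ t ∈ T, x t) + ∑ i, w i * x i).val)) = 2 ^ p ∨
      (∑ x : Fin (2*p) → ZMod 2,
        (-1 : ℤ) ^ (((∑ T ∈ Finset.univ.image (fun j : Fin (2*p) => S.image (· + j)),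
            ∏ t ∈ T, x t) + ∑ i, w i * x i).val)) = -(2 ^ p))
    ↔ (∀ x : Fin (2*p) → ZMod 2,
        (∑ T ∈ Finset.univ.image (fun j : Fin (2*p) => S.image (· + j)), ∏ t ∈ T, x t)
          = ∑ i : Fin p, x ⟨i.val, by have := i.isLt; omega⟩ *
              x ⟨p + i.val, by have := i.isLt; omega⟩) := by
  haveI : NeZero (2*p) := ⟨by omega⟩
  have hSne : S.Nonempty := ⟨_, hS0⟩
  constructor
  · intro hbent
    have hb : ∀ w : Fin (2*p) → ZMod 2,
        Stmt17.WW p S w = 2^p ∨ Stmt17.WW p S w = -(2^p) := hbent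
    have hM := Stmt17.MS_card_odd p hp hp2 S hSne (hb _) (hb _)
    have hinv := Stmt17.S_pi_invariant p hp2 S hM
    have hlin := Stmt17.GG_linear p hp hp2 S hSne hinv (hb _)
    intro x
    have hfin : Stmt17.FF p S x = ∑ c, Stmt17.uu p x c := by
      rw [Stmt17.FF_eq p S hinv x, hlin]
    exact hfin
  · intro hF w
    have hF' : ∀ x, Stmt17.FF p S x = ∑ c, Stmt17.uu p x c := hF
    exact Stmt17.backward p S hF' w
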